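/- Let H be a complex Hilbert space with inner product ⟨·,·⟩ conjugate-linear in the first argument, (e_n)_{n∈ι} a Hilbert (orthonormal) basis of H, X a bounded positive invertible operator on H with positive square root X^{1/2} (and X^{-1/2} = (X^{1/2})⁻¹), φ_n ∈ H with X^{1/2}φ_n = e_n, Ψ_n = Xφ_n, and let (ε_n)_{n∈ι} be a bounded family of real numbers. Let h and T be the bounded operators on H determined by h f = Σ_n ε_n ⟨e_n, f⟩ e_n and T f = Σ_n ε_n ⟨Ψ_n, f⟩ φ_n for all f ∈ H (both sums converge in H and define bounded operators). Then: (i) h is self-adjoint; (ii) T φ_n = ε_n φ_n and T† Ψ_n = ε_n Ψ_n for every n, where T† is the Hilbert adjoint of T; (iii) the intertwining relations X∘T = T†∘X, h∘X^{-1/2} = X^{-1/2}∘T†, and T∘X^{-1/2} = X^{-1/2}∘h hold. -/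

import Mathlib

open scoped InnerProductSpace

/-- With a Hilbert basis `(e_n)`, a bounded positive invertible `X` with
positive square root `X^{1/2}` (inverse `X^{-1/2}`), vectors `φ_n = X^{-1/2} e_n`
(i.e. `X^{1/2} φ_n = e_n`), `Ψ_n = X φ_n`, a bounded real family `(ε_n)`, and the bounded
operators `h f = ∑ ε_n ⟪e_n, f⟫ e_n`, `T f = ∑ ε_n ⟪Ψ_n, f⟫ φ_n`: (i) `h` is self-adjoint;
(ii) `T φ_n = ε_n φ_n` and `T† Ψ_n = ε_n Ψ_n`; (iii) the intertwining relations
`X ∘ T = T† ∘ X`, `h ∘ X^{-1/2} = X^{-1/2} ∘ T†`, and `T ∘ X^{-1/2} = X^{-1/2} ∘ h` hold. -/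
theorem stmt19 {H : Type*} {ι : Type*} [NormedAddCommGroup H] [InnerProductSpace ℂ H]
    [CompleteSpace H]
    (b : HilbertBasis ι ℂ H)
    (X sqrtX sqrtXinv : H →L[ℂ] H)
    (hX : X.IsPositive) (hsqrtX : sqrtX.IsPositive) (hsq : sqrtX * sqrtX = X)
    (hinv1 : sqrtX * sqrtXinv = 1) (hinv2 : sqrtXinv * sqrtX = 1)
    (φ : ι → H) (hφ : ∀ n, sqrtX (φ n) = b n)
    (Ψ : ι → H) (hΨ : ∀ n, Ψ n = X (φ n))
    (ε : ι → ℝ) (hε : ∃ M : ℝ, ∀ n, |ε n| ≤ M)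
    (hOp T : H →L[ℂ] H)
    (hhOp : ∀ f : H, HasSum (fun n => ((ε n : ℂ) * ⟪b n, f⟫_ℂ) • b n) (hOp f))
    (hT : ∀ f : H, HasSum (fun n => ((ε n : ℂ) * ⟪Ψ n, f⟫_ℂ) • φ n) (T f)) :
    IsSelfAdjoint hOp ∧
      (∀ n, T (φ n) = (ε n : ℂ) • φ n) ∧
      (∀ n, ContinuousLinearMap.adjoint T (Ψ n) = (ε n : ℂ) • Ψ n) ∧
      X ∘L T = ContinuousLinearMap.adjoint T ∘L X ∧
      hOp ∘L sqrtXinv = sqrtXinv ∘L ContinuousLinearMap.adjoint T ∧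
      T ∘L sqrtXinv = sqrtXinv ∘L hOp := by
  classical
  have hdag := ContinuousLinearMap.star_eq_adjoint (𝕜 := ℂ) (E := H)
  have hbo : ∀ m n : ι, ⟪b m, b n⟫_ℂ = if m = n then 1 else 0 :=
    orthonormal_iff_ite.mp b.orthonormal
  -- sqrtX is self-adjoint
  have hsa : ∀ x y : H, ⟪sqrtX x, y⟫_ℂ = ⟪x, sqrtX y⟫_ℂ := by
    intro x y
    have := hsqrtX.isSelfAdjoint
    rw [← ContinuousLinearMap.adjoint_inner_left, (ContinuousLinearMap.isSelfAdjoint_iff' ).mp this]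
  -- cancellation helpers
  have cancel1 : ∀ y : H, sqrtX (sqrtXinv y) = y := by
    intro y
    have : (sqrtX * sqrtXinv) y = (1 : H →L[ℂ] H) y := by rw [hinv1]
    simpa using this
  have cancel2 : ∀ y : H, sqrtXinv (sqrtX y) = y := by
    intro y
    have : (sqrtXinv * sqrtX) y = (1 : H →L[ℂ] H) y := by rw [hinv2]
    simpa using this
  have hφinv : ∀ n, φ n = sqrtXinv (b n) := by
    intro n; rw [← hφ n, cancel2]
  have hΨs : ∀ n, Ψ n = sqrtX (b n) := by
    intro n
    rw [hΨ n, ← hsq]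
    show (sqrtX * sqrtX) (φ n) = _
    simp [ContinuousLinearMap.mul_apply, hφ n]
  -- inner products with hOp
  have inner_hOp : ∀ (n : ι) (f : H), ⟪b n, hOp f⟫_ℂ = (ε n : ℂ) * ⟪b n, f⟫_ℂ := by
    intro n f
    have h1 := ((innerSL ℂ (b n)).hasSum (hhOp f))
    have h2 : HasSum (fun m => if m = n then (ε n : ℂ) * ⟪b n, f⟫_ℂ else 0)
        ((ε n : ℂ) * ⟪b n, f⟫_ℂ) := hasSum_ite_eq n _
    refine h1.unique (h2.congr_fun fun m => ?_)
    simp only [innerSL_apply_apply, inner_smul_right, hbo n m]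
    by_cases hm : m = n
    · subst hm; simp
    · have hnm : ¬ n = m := fun h => hm h.symm
      simp [hm, hnm]
  -- hOp on basis vectors
  have hOp_b : ∀ n, hOp (b n) = (ε n : ℂ) • b n := by
    intro n
    have h1 := hhOp (b n)
    have h2 : HasSum (fun m => if m = n then ((ε n : ℂ)) • b n else 0) (((ε n : ℂ)) • b n) :=
      hasSum_ite_eq n _
    refine h1.unique (h2.congr_fun fun m => ?_)
    by_cases hm : m = n
    · subst hm; simp [hbo, b.orthonormal.1 m]
    · simp [hbo, hm]
  -- self-adjointness of hOp
  have hOp_sa : IsSelfAdjoint hOp := by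
    rw [ContinuousLinearMap.isSelfAdjoint_iff_isSymmetric]
    intro x y
    simp only [ContinuousLinearMap.coe_coe]
    have h5 : HasSum (fun n => (ε n : ℂ) * ⟪b n, x⟫_ℂ * ⟪y, b n⟫_ℂ) ⟪y, hOp x⟫_ℂ :=
      ((innerSL ℂ y).hasSum (hhOp x)).congr_fun fun n => by
        rw [innerSL_apply_apply, inner_smul_right]
    have h4 : HasSum (fun n => (ε n : ℂ) * ⟪b n, y⟫_ℂ * ⟪x, b n⟫_ℂ) ⟪x, hOp y⟫_ℂ :=
      ((innerSL ℂ x).hasSum (hhOp y)).congr_fun fun n => by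
        rw [innerSL_apply_apply, inner_smul_right]
    have h6 := h5.star
    have h7 : HasSum (fun n => star ((ε n : ℂ) * ⟪b n, x⟫_ℂ * ⟪y, b n⟫_ℂ)) ⟪hOp x, y⟫_ℂ := by
      have : star ⟪y, hOp x⟫_ℂ = ⟪hOp x, y⟫_ℂ := inner_conj_symm _ _
      rwa [this] at h6
    refine h7.unique (h4.congr_fun fun n => ?_)
    simp only [star_mul', Complex.star_def, inner_conj_symm, Complex.conj_ofReal]
    ring
  -- T = sqrtXinv ∘ hOp ∘ sqrtX
  have hTeq : T = sqrtXinv ∘L hOp ∘L sqrtX := by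
    ext f
    have h1 := hT f
    have h2 := (sqrtXinv.hasSum (hhOp (sqrtX f)))
    have h3 : HasSum (fun n => ((ε n : ℂ) * ⟪Ψ n, f⟫_ℂ) • φ n)
        (sqrtXinv (hOp (sqrtX f))) := by
      refine h2.congr_fun fun n => ?_
      rw [hΨs n, hsa, hφinv n, ContinuousLinearMap.map_smul]
    exact h1.unique h3
  have hadjinv : ContinuousLinearMap.adjoint sqrtXinv = sqrtXinv := by
    have hs : ContinuousLinearMap.adjoint sqrtX = sqrtX := hsqrtX.isSelfAdjoint
    have h1 : ContinuousLinearMap.adjoint sqrtXinv * sqrtX = 1 := by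
      have := congrArg star hinv1
      rw [star_mul, star_one, hdag, hdag, hs] at this
      exact this
    calc ContinuousLinearMap.adjoint sqrtXinv
        = ContinuousLinearMap.adjoint sqrtXinv * (sqrtX * sqrtXinv) := by rw [hinv1, mul_one]
      _ = (ContinuousLinearMap.adjoint sqrtXinv * sqrtX) * sqrtXinv := by rw [mul_assoc]
      _ = sqrtXinv := by rw [h1, one_mul]
  have hTadj : ContinuousLinearMap.adjoint T = sqrtX ∘L hOp ∘L sqrtXinv := by
    rw [hTeq]
    rw [← hdag]
    show star (sqrtXinv * (hOp * sqrtX)) = sqrtX * (hOp * sqrtXinv)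
    rw [star_mul, star_mul, hdag, hdag, hdag, hadjinv, hsqrtX.isSelfAdjoint.adjoint_eq,
      hOp_sa.adjoint_eq, mul_assoc]
  refine ⟨hOp_sa, ?_, ?_, ?_, ?_, ?_⟩
  · intro n
    rw [hTeq]
    show sqrtXinv (hOp (sqrtX (φ n))) = _
    rw [hφ n, hOp_b n, ContinuousLinearMap.map_smul, ← hφinv n]
  · intro n
    rw [hTadj]
    show sqrtX (hOp (sqrtXinv (Ψ n))) = _
    rw [hΨs n, cancel2, hOp_b n, ContinuousLinearMap.map_smul, ← hΨs n]
  · rw [hTadj, hTeq]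
    ext f
    show X (sqrtXinv (hOp (sqrtX f))) = sqrtX (hOp (sqrtXinv (X f)))
    rw [← hsq]
    show (sqrtX * sqrtX) (sqrtXinv (hOp (sqrtX f))) = sqrtX (hOp (sqrtXinv ((sqrtX * sqrtX) f)))
    simp only [ContinuousLinearMap.mul_apply, cancel1, cancel2]
  · rw [hTadj]
    ext f
    show hOp (sqrtXinv f) = sqrtXinv (sqrtX (hOp (sqrtXinv f)))
    rw [cancel2]
  · rw [hTeq]
    ext f
    show sqrtXinv (hOp (sqrtX (sqrtXinv f))) = sqrtXinv (hOp f)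
    rw [cancel1]
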